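/- A complex d×d matrix x is a fixed point of the twirl if and only if it lies in the commutant of the represented group: T(x) = x holds if and only if σ(s) * x = x * σ(s) for all s ∈ G. Consequently the range of T is exactly the commutant {x | σ(s) * x = x * σ(s) for all s ∈ G}. -/

import Mathlib

open Matrix MeasureTheory

attribute [local instance] Matrix.normedAddCommGroup Matrix.normedSpace

/-- A matrix `x` is a fixed point of the twirl
`T x = ∫ s, σ s * x * (σ s)ᴴ ∂μ` iff it commutes with `σ s` for every `s ∈ G`;
consequently the range of `T` is exactly the commutant of the represented group. -/
theorem twirl_fixed_iff_commutant_and_range (d : ℕ) (hd : 1 ≤ d)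
    {G : Type*} [Group G] [TopologicalSpace G] [IsTopologicalGroup G] [CompactSpace G]
    [MeasurableSpace G] [BorelSpace G]
    (μ : Measure G) [μ.IsHaarMeasure] [IsProbabilityMeasure μ]
    (σ : G → Matrix (Fin d) (Fin d) ℂ) (hcont : Continuous σ)
    (hunitary : ∀ s : G, (σ s)ᴴ * σ s = 1)
    (hmul : ∀ s t : G, σ (s * t) = σ s * σ t) :
    (∀ x : Matrix (Fin d) (Fin d) ℂ,
      (∫ s, σ s * x * (σ s)ᴴ ∂μ) = x ↔ ∀ s : G, σ s * x = x * σ s) ∧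
    Set.range (fun x : Matrix (Fin d) (Fin d) ℂ => ∫ s, σ s * x * (σ s)ᴴ ∂μ) =
      {x : Matrix (Fin d) (Fin d) ℂ | ∀ s : G, σ s * x = x * σ s} := by
  have hyin : ∀ s : G, σ s * (σ s)ᴴ = 1 := fun s => mul_eq_one_comm.mp (hunitary s)
  have hcont' : ∀ x : Matrix (Fin d) (Fin d) ℂ,
      Continuous (fun s : G => σ s * x * (σ s)ᴴ) :=
    fun x => (hcont.matrix_mul continuous_const).matrix_mul hcont.matrix_conjTranspose
  have hint : ∀ x : Matrix (Fin d) (Fin d) ℂ,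
      @Integrable _ (Matrix.normedAddCommGroup.toUniformSpace.toTopologicalSpace) _ _ _ (fun s : G => σ s * x * (σ s)ᴴ) μ := fun x => (hcont' x).integrable_of_hasCompactSupport (HasCompactSupport.of_compactSpace _)
  -- the key invariance of the twirl
  have key : ∀ (x : Matrix (Fin d) (Fin d) ℂ) (t : G),
      σ t * (∫ s, σ s * x * (σ s)ᴴ ∂μ) * (σ t)ᴴ = ∫ s, σ s * x * (σ s)ᴴ ∂μ := by
    intro x t
    set L : Matrix (Fin d) (Fin d) ℂ →L[ℂ] Matrix (Fin d) (Fin d) ℂ :=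
      (((LinearMap.mulLeft ℂ (σ t)).comp
        (LinearMap.mulRight ℂ ((σ t)ᴴ))).toContinuousLinearMap) with hL
    have hLapp : ∀ y : Matrix (Fin d) (Fin d) ℂ, L y = σ t * y * (σ t)ᴴ := by
      intro y
      simp [hL, LinearMap.mulLeft_apply, LinearMap.mulRight_apply, mul_assoc]
    calc σ t * (∫ s, σ s * x * (σ s)ᴴ ∂μ) * (σ t)ᴴ
        = L (∫ s, σ s * x * (σ s)ᴴ ∂μ) := (hLapp _).symm
      _ = ∫ s, L (σ s * x * (σ s)ᴴ) ∂μ := (L.integral_comp_comm (hint x)).symm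
      _ = ∫ s, σ (t * s) * x * (σ (t * s))ᴴ ∂μ := by
          congr 1; funext s
          rw [hLapp, hmul, conjTranspose_mul]
          simp only [Matrix.mul_assoc]
      _ = ∫ s, σ s * x * (σ s)ᴴ ∂μ :=
          integral_mul_left_eq_self (fun s => σ s * x * (σ s)ᴴ) t
  have comm_of_fix : ∀ x : Matrix (Fin d) (Fin d) ℂ,
      (∫ s, σ s * x * (σ s)ᴴ ∂μ) = x → ∀ s : G, σ s * x = x * σ s := by
    intro x hx t
    have h := key x t
    rw [hx] at h
    calc σ t * x = σ t * x * ((σ t)ᴴ * σ t) := by rw [hunitary, mul_one]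
      _ = (σ t * x * (σ t)ᴴ) * σ t := by simp only [Matrix.mul_assoc]
      _ = x * σ t := by rw [h]
  have fix_of_comm : ∀ x : Matrix (Fin d) (Fin d) ℂ,
      (∀ s : G, σ s * x = x * σ s) → (∫ s, σ s * x * (σ s)ᴴ ∂μ) = x := by
    intro x hx
    have : (fun s : G => σ s * x * (σ s)ᴴ) = fun _ : G => x := by
      funext s
      rw [hx s, mul_assoc, hyin, mul_one]
    rw [this, integral_const, probReal_univ, one_smul]
  constructor
  · exact fun x => ⟨comm_of_fix x, fix_of_comm x⟩
  · ext x
    constructor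
    · rintro ⟨y, rfl⟩ t
      have h := key y t
      calc σ t * (∫ s, σ s * y * (σ s)ᴴ ∂μ)
          = σ t * (∫ s, σ s * y * (σ s)ᴴ ∂μ) * ((σ t)ᴴ * σ t) := by
            rw [hunitary, mul_one]
        _ = (σ t * (∫ s, σ s * y * (σ s)ᴴ ∂μ) * (σ t)ᴴ) * σ t := by simp only [Matrix.mul_assoc]
        _ = (∫ s, σ s * y * (σ s)ᴴ ∂μ) * σ t := by rw [h]
    · intro hx
      exact ⟨x, fix_of_comm x hx⟩
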